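/- Let 𝒢 be a groupoid with 𝒢₀ finite acting partially on a coalgebra C via ({θ_g},{C_g},{P_g}), and suppose C = ⊕_{e∈𝒢₀} C_e. Then the maps α_g := θ_g∘P_{g⁻¹} define a symmetric left partial action of the groupoid algebra k𝒢 on C; explicitly: Σ_{e∈𝒢₀} α_e = id_C; Δ(α_g(c)) = α_g(c₁)⊗α_g(c₂) for all g ∈ 𝒢, c ∈ C; and for all g,h ∈ 𝒢 and c ∈ C, α_g(α_h(c)) = α_{gh}(c₁)ε(α_h(c₂)) = ε(α_h(c₁))α_{gh}(c₂) if gh is defined, while α_g(α_h(c)) = 0 if gh is not defined. -/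

import Mathlib

open TensorProduct Coalgebra

/-- A groupoid in the sense of partial action theory: a set with a partially defined
product (`defined g h` expresses that `g h` exists; `mul g h` is the product, with junk
value otherwise) and inverses, with `d(g) = g⁻¹g`, `r(g) = gg⁻¹`. -/
structure Gpd (G : Type*) where
  defined : G → G → Prop
  mul : G → G → G
  inv : G → G
  defined_mul_inv : ∀ g, defined g (inv g)
  defined_inv_mul : ∀ g, defined (inv g) g
  /-- `∃ gh` iff `d(g) = r(h)` -/
  defined_iff : ∀ g h, defined g h ↔ mul (inv g) g = mul h (inv h)
  mul_assoc' : ∀ g h l, defined g h → defined h l → mul (mul g h) l = mul g (mul h l)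
  defined_mul_left : ∀ g h l, defined g h → defined h l → defined (mul g h) l
  defined_mul_right : ∀ g h l, defined g h → defined h l → defined g (mul h l)
  /-- `g d(g) = g` -/
  mul_d : ∀ g, mul g (mul (inv g) g) = g
  /-- `r(g) g = g` -/
  r_mul : ∀ g, mul (mul g (inv g)) g = g
  inv_inv : ∀ g, inv (inv g) = g

namespace Gpd

variable {G : Type*} (S : Gpd G)

/-- `d(g) = g⁻¹ g`. -/
def d (g : G) : G := S.mul (S.inv g) g

/-- `r(g) = g g⁻¹`. -/
def r (g : G) : G := S.mul g (S.inv g)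

/-- `e` is an identity element of the groupoid. -/
def IsIdent (e : G) : Prop := ∃ g : G, e = S.d g

end Gpd

noncomputable section

variable (k : Type*) [Field k]
variable {G : Type*}
variable (C : Type*) [AddCommGroup C] [Module k C] [Coalgebra k C]

/-- A structure of left partial `k𝒢`-module coalgebra on `C`, described by the family of
linear maps `α_g(c) = δ_g · c` (`E` is the finite set of identity elements of `𝒢`):
`Σ_{e ∈ 𝒢₀} α_e = id` (PMC1); `Δ(δ_g · c) = (δ_g · c₁) ⊗ (δ_g · c₂)` (PMC2); and
`δ_g·(δ_h·c) = (δ_{gh}·c₁) ε(δ_h·c₂)` when `gh` is defined, and `0` otherwise (PMC3). -/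
structure IsGpdPartialModuleCoalgebra (S : Gpd G) (E : Finset G)
    (α : G → (C →ₗ[k] C)) : Prop where
  ident_sum : ∑ e ∈ E, α e = LinearMap.id
  comul_compat : ∀ (g : G) (c : C),
      comul (R := k) (α g c) = TensorProduct.map (α g) (α g) (comul (R := k) c)
  comp_defined : ∀ (g h : G) (c : C), S.defined g h →
      α g (α h c)
        = (TensorProduct.rid k C)
            ((TensorProduct.map (α (S.mul g h)) (counit (R := k) ∘ₗ α h)) (comul (R := k) c))
  comp_undefined : ∀ (g h : G) (c : C), ¬ S.defined g h → α g (α h c) = 0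

/-- A *symmetric* left partial `k𝒢`-module coalgebra structure: additionally
`δ_g·(δ_h·c) = ε(δ_h·c₁) (δ_{gh}·c₂)` when `gh` is defined. -/
structure IsGpdSymmetricPartialModuleCoalgebra (S : Gpd G) (E : Finset G)
    (α : G → (C →ₗ[k] C))
    extends IsGpdPartialModuleCoalgebra k C S E α : Prop where
  comp_defined' : ∀ (g h : G) (c : C), S.defined g h →
      α g (α h c)
        = (TensorProduct.lid k C)
            ((TensorProduct.map (counit (R := k) ∘ₗ α h) (α (S.mul g h))) (comul (R := k) c))

end

noncomputable section

open scoped Classical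

variable (k : Type*) [Field k]
variable {G : Type*}
variable (C : Type*) [AddCommGroup C] [Module k C] [Coalgebra k C]

/-- A partial action of a groupoid `𝒢` on a coalgebra `C`: a family of subcoalgebras
`C_g`, coalgebra isomorphisms `θ_g : C_{g⁻¹} → C_g` (encoded as global linear maps, whose
behaviour only matters on `C_{g⁻¹}`) and linear projections `P_g : C → C` onto `C_g`,
subject to the axioms of Definition "partial groupoid action on a coalgebra". -/
structure GpdCoaction (S : Gpd G) where
  Csub : G → Submodule k C
  θ : G → (C →ₗ[k] C)
  P : G → (C →ₗ[k] C)
  /-- each `C_g` is a subcoalgebra -/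
  Csub_subcoalgebra : ∀ g : G, ∀ c ∈ Csub g,
      comul (R := k) c
        ∈ LinearMap.range (TensorProduct.map (Csub g).subtype (Csub g).subtype)
  P_proj : ∀ g : G, (P g) ∘ₗ (P g) = P g
  P_range : ∀ g : G, LinearMap.range (P g) = Csub g
  /-- `(P_g ⊗ P_g)Δ = Δ P_g` -/
  P_comul : ∀ (g : G) (c : C),
      TensorProduct.map (P g) (P g) (comul (R := k) c) = comul (R := k) (P g c)
  /-- `P_g(c) = P_{r(g)}(c₁) ε(P_g(c₂))` -/
  P_quasi : ∀ (g : G) (c : C),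
      P g c = (TensorProduct.rid k C)
          ((TensorProduct.map (P (S.r g)) (counit (R := k) ∘ₗ P g)) (comul (R := k) c))
  /-- `P_g(c) = P_{r(g)}(c₂) ε(P_g(c₁))` -/
  P_quasi' : ∀ (g : G) (c : C),
      P g c = (TensorProduct.lid k C)
          ((TensorProduct.map (counit (R := k) ∘ₗ P g) (P (S.r g))) (comul (R := k) c))
  /-- `θ_e = id_{C_e}` for identities `e` -/
  θ_ident : ∀ e : G, S.IsIdent e → ∀ c ∈ Csub e, θ e c = c
  /-- `θ_g` maps `C_{g⁻¹}` into `C_g` -/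
  θ_maps : ∀ g : G, ∀ c ∈ Csub (S.inv g), θ g c ∈ Csub g
  /-- `θ_g` is injective on `C_{g⁻¹}` -/
  θ_inj : ∀ g : G, ∀ c ∈ Csub (S.inv g), ∀ c' ∈ Csub (S.inv g), θ g c = θ g c' → c = c'
  /-- `θ_g : C_{g⁻¹} → C_g` is surjective -/
  θ_surj : ∀ g : G, ∀ c ∈ Csub g, ∃ c' ∈ Csub (S.inv g), θ g c' = c
  /-- `θ_g` is comultiplicative on `C_{g⁻¹}` -/
  θ_comul : ∀ g : G, ∀ c ∈ Csub (S.inv g),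
      comul (R := k) (θ g c) = TensorProduct.map (θ g) (θ g) (comul (R := k) c)
  /-- `θ_g` is counital on `C_{g⁻¹}` -/
  θ_counit : ∀ g : G, ∀ c ∈ Csub (S.inv g), counit (R := k) (θ g c) = counit (R := k) c
  /-- the projections commute -/
  P_comm : ∀ g h : G, (P g) ∘ₗ (P h) = (P h) ∘ₗ (P g)
  /-- `θ_{h⁻¹} ∘ P_h ∘ P_{g⁻¹} = P_{(gh)⁻¹} ∘ θ_{h⁻¹} ∘ P_h` when `gh` is defined -/
  compat₂ : ∀ g h : G, S.defined g h →
      (θ (S.inv h)) ∘ₗ (P h) ∘ₗ (P (S.inv g))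
        = (P (S.inv (S.mul g h))) ∘ₗ (θ (S.inv h)) ∘ₗ (P h)
  /-- `θ_g ∘ θ_h ∘ P_{(gh)⁻¹} ∘ P_{h⁻¹} = θ_{gh} ∘ P_{(gh)⁻¹} ∘ P_{h⁻¹}` when `gh` is defined -/
  compat₃ : ∀ g h : G, S.defined g h →
      (θ g) ∘ₗ (θ h) ∘ₗ (P (S.inv (S.mul g h))) ∘ₗ (P (S.inv h))
        = (θ (S.mul g h)) ∘ₗ (P (S.inv (S.mul g h))) ∘ₗ (P (S.inv h))

end

open scoped Classical

section GpdLemmas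

namespace Gpd
variable {G : Type*} (S : Gpd G)

lemma defined_g_d (g : G) : S.defined g (S.mul (S.inv g) g) :=
  S.defined_mul_right g (S.inv g) g (S.defined_mul_inv g) (S.defined_inv_mul g)

lemma defined_d_d (g : G) : S.defined (S.mul (S.inv g) g) (S.mul (S.inv g) g) :=
  S.defined_mul_left (S.inv g) g (S.mul (S.inv g) g) (S.defined_inv_mul g) (S.defined_g_d g)

lemma ident_defined_self {e : G} (he : S.IsIdent e) : S.defined e e := by
  obtain ⟨g, rfl⟩ := he
  simp only [Gpd.d]
  exact S.defined_d_d g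

lemma ident_mul_self {e : G} (he : S.IsIdent e) : S.mul e e = e := by
  obtain ⟨g, rfl⟩ := he
  simp only [Gpd.d]
  rw [S.mul_assoc' (S.inv g) g _ (S.defined_inv_mul g) (S.defined_g_d g), S.mul_d g]

lemma ident_d_eq_r {e : G} (he : S.IsIdent e) : S.mul (S.inv e) e = S.mul e (S.inv e) :=
  (S.defined_iff e e).mp (S.ident_defined_self he)

lemma ident_d_self {e : G} (he : S.IsIdent e) : S.mul (S.inv e) e = e := by
  have h1 : S.mul (S.mul (S.inv e) e) e = S.mul (S.inv e) e := by
    rw [S.mul_assoc' (S.inv e) e e (S.defined_inv_mul e) (S.ident_defined_self he),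
      S.ident_mul_self he]
  rw [S.ident_d_eq_r he] at h1
  rw [S.r_mul e] at h1
  rw [S.ident_d_eq_r he, ← h1]

lemma ident_r_self {e : G} (he : S.IsIdent e) : S.mul e (S.inv e) = e := by
  rw [← S.ident_d_eq_r he]; exact S.ident_d_self he

lemma ident_inv {e : G} (he : S.IsIdent e) : S.inv e = e := by
  have h := S.mul_d (S.inv e)
  rw [S.inv_inv e, S.ident_r_self he, S.ident_d_self he] at h
  exact h.symm

lemma d_ident (g : G) : S.IsIdent (S.mul (S.inv g) g) := ⟨g, rfl⟩

lemma r_ident (g : G) : S.IsIdent (S.mul g (S.inv g)) :=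
  ⟨S.inv g, by simp only [Gpd.d, S.inv_inv]⟩

variable {g h : G}

lemma defined_mul_inv_right (hgh : S.defined g h) : S.defined (S.mul g h) (S.inv h) :=
  S.defined_mul_left g h (S.inv h) hgh (S.defined_mul_inv h)

lemma mul_mul_inv_cancel (hgh : S.defined g h) : S.mul (S.mul g h) (S.inv h) = g := by
  rw [S.mul_assoc' g h (S.inv h) hgh (S.defined_mul_inv h), ← (S.defined_iff g h).mp hgh,
    S.mul_d g]

lemma d_mul_eq (hgh : S.defined g h) :
    S.mul (S.inv (S.mul g h)) (S.mul g h) = S.mul (S.inv h) h := by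
  have := (S.defined_iff (S.mul g h) (S.inv h)).mp (S.defined_mul_inv_right hgh)
  rwa [S.inv_inv h] at this

lemma r_inv_eq (x : G) : S.r (S.inv x) = S.mul (S.inv x) x := by
  simp only [Gpd.r, S.inv_inv]

lemma r_inv_mul_eq (hgh : S.defined g h) : S.r (S.inv (S.mul g h)) = S.r (S.inv h) := by
  rw [S.r_inv_eq, S.r_inv_eq, S.d_mul_eq hgh]

end Gpd

end GpdLemmas

section CoalgLemmas

open TensorProduct Coalgebra

variable {k : Type*} [Field k] {G : Type*}
variable {C : Type*} [AddCommGroup C] [Module k C] [Coalgebra k C]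
variable {S : Gpd G}

lemma tmap_tmap {M₁ M₂ M₃ N₁ N₂ N₃ : Type*}
    [AddCommMonoid M₁] [AddCommMonoid M₂] [AddCommMonoid M₃]
    [AddCommMonoid N₁] [AddCommMonoid N₂] [AddCommMonoid N₃]
    [Module k M₁] [Module k M₂] [Module k M₃] [Module k N₁] [Module k N₂] [Module k N₃]
    (f₂ : M₂ →ₗ[k] M₃) (f₁ : M₁ →ₗ[k] M₂) (g₂ : N₂ →ₗ[k] N₃) (g₁ : N₁ →ₗ[k] N₂)
    (t : M₁ ⊗[k] N₁) :
    TensorProduct.map f₂ g₂ (TensorProduct.map f₁ g₁ t)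
      = TensorProduct.map (f₂ ∘ₗ f₁) (g₂ ∘ₗ g₁) t := by
  rw [TensorProduct.map_comp]; rfl

lemma rid_nat (f : C →ₗ[k] C) (t : C ⊗[k] k) :
    f (TensorProduct.rid k C t)
      = TensorProduct.rid k C (TensorProduct.map f LinearMap.id t) := by
  induction t using TensorProduct.induction_on with
  | zero => simp
  | tmul x a => simp
  | add x y hx hy => simp [hx, hy]

lemma lid_nat (f : C →ₗ[k] C) (t : k ⊗[k] C) :
    f (TensorProduct.lid k C t)
      = TensorProduct.lid k C (TensorProduct.map LinearMap.id f t) := by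
  induction t using TensorProduct.induction_on with
  | zero => simp
  | tmul a x => simp
  | add x y hx hy => simp [hx, hy]

variable (A : GpdCoaction k C S)

lemma mem_Csub (g : G) (c : C) : A.P g c ∈ A.Csub g := by
  rw [← A.P_range g]; exact ⟨c, rfl⟩

lemma P_fix {g : G} {x : C} (hx : x ∈ A.Csub g) : A.P g x = x := by
  rw [← A.P_range g] at hx
  obtain ⟨y, rfl⟩ := hx
  exact LinearMap.congr_fun (A.P_proj g) y

lemma Pr_P (g : G) (c : C) : A.P (S.r g) (A.P g c) = A.P g c := by
  conv_lhs => rw [A.P_quasi g c]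
  rw [rid_nat, tmap_tmap, LinearMap.id_comp, A.P_proj, ← A.P_quasi]

lemma Csub_le_r (g : G) {x : C} (hx : x ∈ A.Csub g) : x ∈ A.Csub (S.r g) := by
  rw [← A.P_range g] at hx
  obtain ⟨y, rfl⟩ := hx
  rw [← Pr_P A g y]
  exact mem_Csub A _ _

lemma P_Pr (g : G) : A.P g ∘ₗ A.P (S.r g) = A.P g := by
  rw [A.P_comm]
  exact LinearMap.ext fun c => Pr_P A g c

lemma quasi_pair {g h : G} (hgh : S.defined g h) (c : C) :
    A.P (S.inv (S.mul g h)) (A.P (S.inv h) c)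
      = TensorProduct.rid k C
          ((TensorProduct.map (A.P (S.inv (S.mul g h)))
            ((counit : C →ₗ[k] k) ∘ₗ A.P (S.inv h))) (comul (R := k) c)) := by
  have hP : A.P (S.inv (S.mul g h)) ∘ₗ A.P (S.r (S.inv h)) = A.P (S.inv (S.mul g h)) := by
    rw [← S.r_inv_mul_eq hgh]; exact P_Pr A _
  conv_lhs => rw [A.P_quasi (S.inv h) c]
  rw [rid_nat, tmap_tmap, hP, LinearMap.id_comp]

lemma quasi_pair' {g h : G} (hgh : S.defined g h) (c : C) :
    A.P (S.inv (S.mul g h)) (A.P (S.inv h) c)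
      = TensorProduct.lid k C
          ((TensorProduct.map ((counit : C →ₗ[k] k) ∘ₗ A.P (S.inv h))
            (A.P (S.inv (S.mul g h)))) (comul (R := k) c)) := by
  have hP : A.P (S.inv (S.mul g h)) ∘ₗ A.P (S.r (S.inv h)) = A.P (S.inv (S.mul g h)) := by
    rw [← S.r_inv_mul_eq hgh]; exact P_Pr A _
  conv_lhs => rw [A.P_quasi' (S.inv h) c]
  rw [lid_nat, tmap_tmap, hP, LinearMap.id_comp]

lemma counit_theta (h : G) :
    (counit : C →ₗ[k] k) ∘ₗ (A.θ h ∘ₗ A.P (S.inv h))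
      = (counit : C →ₗ[k] k) ∘ₗ A.P (S.inv h) :=
  LinearMap.ext fun c => A.θ_counit h (A.P (S.inv h) c) (mem_Csub A _ _)

lemma alpha_comp {g h : G} (hgh : S.defined g h) (c : C) :
    A.θ g (A.P (S.inv g) (A.θ h (A.P (S.inv h) c)))
      = A.θ (S.mul g h) (A.P (S.inv (S.mul g h)) (A.P (S.inv h) c)) := by
  have h2 := A.compat₂ (S.mul g h) (S.inv h) (S.defined_mul_inv_right hgh)
  rw [S.inv_inv h, S.mul_mul_inv_cancel hgh] at h2
  have h2' := LinearMap.congr_fun h2 c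
  simp only [LinearMap.comp_apply] at h2'
  have h3 := LinearMap.congr_fun (A.compat₃ g h hgh) c
  simp only [LinearMap.comp_apply] at h3
  have hc := LinearMap.congr_fun (A.P_comm (S.inv h) (S.inv (S.mul g h))) c
  simp only [LinearMap.comp_apply] at hc
  rw [← h2', hc, h3]

end CoalgLemmas

/-- If a groupoid `𝒢` (with `𝒢₀` finite) acts partially on a coalgebra
`C` with `C = ⊕_{e ∈ 𝒢₀} C_e`, then the maps `α_g := θ_g ∘ P_{g⁻¹}` define a symmetric
left partial action of the groupoid algebra `k𝒢` on `C`. -/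
theorem gpd_coaction_gives_symmetric_partial_module_coalgebra
    (k : Type*) [Field k] {G : Type*}
    (C : Type*) [AddCommGroup C] [Module k C] [Coalgebra k C]
    (S : Gpd G) (E : Finset G) (hE : ∀ e : G, e ∈ E ↔ S.IsIdent e)
    (A : GpdCoaction k C S)
    (hdsum : DirectSum.IsInternal (fun e : {x : G // S.IsIdent x} => A.Csub e.val)) :
    IsGpdSymmetricPartialModuleCoalgebra k C S E
      (fun g => (A.θ g) ∘ₗ (A.P (S.inv g))) := by
  
  classical
  have hPe : ∀ e ∈ E, A.θ e ∘ₗ A.P (S.inv e) = A.P e := by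
    intro e he
    rw [S.ident_inv ((hE e).mp he)]
    exact LinearMap.ext fun c => A.θ_ident e ((hE e).mp he) (A.P e c) (mem_Csub A e c)
  have hzero : ∀ e e' : G, S.IsIdent e → S.IsIdent e' → e ≠ e' →
      ∀ x ∈ A.Csub e', A.P e x = 0 := by
    intro e e' he he' hne x hx
    have hcm := LinearMap.congr_fun (A.P_comm e e') x
    simp only [LinearMap.comp_apply] at hcm
    have hmem : A.P e x = A.P e' (A.P e x) := by
      conv_lhs => rw [← P_fix A hx]
      exact hcm
    have hdisj : Disjoint (A.Csub e) (A.Csub e') := by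
      have hne' : (⟨e, he⟩ : {x : G // S.IsIdent x}) ≠ ⟨e', he'⟩ :=
        fun hq => hne (congrArg Subtype.val hq)
      exact hdsum.submodule_iSupIndep.pairwiseDisjoint hne'
    exact Submodule.disjoint_def.mp hdisj _ (mem_Csub A e x) (hmem ▸ mem_Csub A e' _)
  refine { ident_sum := ?_, comul_compat := ?_, comp_defined := ?_,
           comp_undefined := ?_, comp_defined' := ?_ }
  · -- PMC1
    show (∑ e ∈ E, A.θ e ∘ₗ A.P (S.inv e)) = LinearMap.id
    rw [Finset.sum_congr rfl hPe]
    ext c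
    have hc : c ∈ ⨆ (e : {x : G // S.IsIdent x}), A.Csub e.val := by
      rw [hdsum.submodule_iSup_eq_top]; exact Submodule.mem_top
    simp only [LinearMap.sum_apply, LinearMap.id_apply, LinearMap.coe_comp,
      Function.comp_apply, LinearMap.coe_sum, Finset.sum_apply]
    refine Submodule.iSup_induction (motive := fun x : C => ∑ e ∈ E, A.P e x = x) _ hc ?_ ?_ ?_
    · intro i x hx
      rw [Finset.sum_eq_single i.val
        (fun e heE hne => hzero e i.val ((hE e).mp heE) i.2 hne x hx)
        (fun hnot => absurd ((hE i.val).mpr i.2) hnot)]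
      exact P_fix A hx
    · simp
    · intro x y hx hy
      simp only [map_add, Finset.sum_add_distrib, hx, hy]
  · -- PMC2
    intro g c
    simp only [LinearMap.comp_apply]
    rw [A.θ_comul g _ (mem_Csub A (S.inv g) c), ← A.P_comul, tmap_tmap]
  · -- PMC3, defined case
    intro g h c hgh
    simp only [LinearMap.comp_apply]
    rw [alpha_comp A hgh c, quasi_pair A hgh c, rid_nat, tmap_tmap, counit_theta,
      LinearMap.id_comp]
  · -- PMC3, undefined case
    intro g h c hngh
    simp only [LinearMap.comp_apply]
    set y := A.θ h (A.P (S.inv h) c) with hy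
    have hmem1 : y ∈ A.Csub h := A.θ_maps h _ (mem_Csub A _ _)
    have hcm := LinearMap.congr_fun (A.P_comm (S.inv g) h) y
    simp only [LinearMap.comp_apply] at hcm
    have heq : A.P (S.inv g) y = A.P h (A.P (S.inv g) y) := by
      rw [← hcm, P_fix A hmem1]
    have h1' : A.P (S.inv g) y ∈ A.Csub (S.r (S.inv g)) :=
      Csub_le_r A _ (mem_Csub A _ _)
    have h2' : A.P (S.inv g) y ∈ A.Csub (S.r h) :=
      Csub_le_r A _ (heq ▸ mem_Csub A h _)
    rw [S.r_inv_eq g] at h1'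
    simp only [Gpd.r] at h2'
    have hne : S.mul (S.inv g) g ≠ S.mul h (S.inv h) :=
      fun hq => hngh ((S.defined_iff g h).mpr hq)
    have hdisj : Disjoint (A.Csub (S.mul (S.inv g) g)) (A.Csub (S.mul h (S.inv h))) := by
      have hne' : (⟨S.mul (S.inv g) g, S.d_ident g⟩ : {x : G // S.IsIdent x})
          ≠ ⟨S.mul h (S.inv h), S.r_ident h⟩ := fun hq => hne (congrArg Subtype.val hq)
      exact hdsum.submodule_iSupIndep.pairwiseDisjoint hne'
    have hz : A.P (S.inv g) y = 0 := Submodule.disjoint_def.mp hdisj _ h1' h2'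
    rw [hz, map_zero]
  · -- symmetric case
    intro g h c hgh
    simp only [LinearMap.comp_apply]
    rw [alpha_comp A hgh c, quasi_pair' A hgh c, lid_nat, tmap_tmap, counit_theta,
      LinearMap.id_comp]
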